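/- For graphs G and H, the δ-complement of the Cartesian product G □ H has edge set equal to E(G_δ □ H_δ) ∪ S, where S consists of pairs uv with u = (u₁,u₂), v = (v₁,v₂) such that u₁ ≠ v₁, u₂ ≠ v₂, and deg_{G□H}(u) = deg_{G□H}(v). -/

import Mathlib

open scoped Classical
open SimpleGraph

/-- The δ-complement of a graph: `u v` are adjacent iff they are distinct and
either they have equal degrees and are non-adjacent in `G`, or they have
different degrees and are adjacent in `G`. -/
def deltaComp {V : Type*} [Fintype V] (G : SimpleGraph V) : SimpleGraph V where
  Adj u v := u ≠ v ∧ ((G.degree u = G.degree v ∧ ¬ G.Adj u v) ∨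
    (G.degree u ≠ G.degree v ∧ G.Adj u v))
  symm := by
    constructor
    intro u v h
    refine ⟨h.1.symm, ?_⟩
    rcases h.2 with ⟨hd, ha⟩ | ⟨hd, ha⟩
    · exact Or.inl ⟨hd.symm, fun hh => ha hh.symm⟩
    · exact Or.inr ⟨fun hh => hd hh.symm, ha.symm⟩
  loopless := ⟨fun v h => h.1 rfl⟩

/-- The δ-chromatic number: chromatic number of the δ-complement. -/
noncomputable def deltaChrom {V : Type*} [Fintype V] (G : SimpleGraph V) : ℕ∞ :=
  (deltaComp G).chromaticNumber

lemma deltaComp_adj' {V : Type*} [Fintype V] (G : SimpleGraph V) (u v : V) :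
    (deltaComp G).Adj u v ↔ u ≠ v ∧ ((G.degree u = G.degree v ∧ ¬ G.Adj u v) ∨
      (G.degree u ≠ G.degree v ∧ G.Adj u v)) := Iff.rfl

set_option maxHeartbeats 1000000 in
/-- The edges of `(G □ H)_δ` are exactly the edges of `G_δ □ H_δ` together with
the pairs differing in both coordinates and having equal degrees in `G □ H`. -/
theorem deltaComp_boxProd_adj {V W : Type*} [Fintype V] [Fintype W]
    (G : SimpleGraph V) (H : SimpleGraph W) (u v : V × W) :
    (deltaComp (G □ H)).Adj u v ↔
      ((deltaComp G □ deltaComp H).Adj u v ∨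
        (u.1 ≠ v.1 ∧ u.2 ≠ v.2 ∧ (G □ H).degree u = (G □ H).degree v)) := by
  obtain ⟨u1, u2⟩ := u
  obtain ⟨v1, v2⟩ := v
  simp only [deltaComp_adj', SimpleGraph.boxProd_adj, SimpleGraph.degree_boxProd, ne_eq,
    Prod.mk.injEq, not_and]
  by_cases h1 : u1 = v1
  · subst h1
    by_cases h2 : u2 = v2
    · subst h2; simp
    · have key : G.degree u1 + H.degree u2 = G.degree u1 + H.degree v2 ↔
          H.degree u2 = H.degree v2 := by omega
      have hG : ¬ G.Adj u1 u1 := G.irrefl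
      simp only [key, h2, hG]
      itauto
  · by_cases h2 : u2 = v2
    · subst h2
      have key : G.degree u1 + H.degree u2 = G.degree v1 + H.degree u2 ↔
          G.degree u1 = G.degree v1 := by omega
      have hH : ¬ H.Adj u2 u2 := H.irrefl
      simp only [key, h1, hH]
      itauto
    · simp only [h1, h2, and_false, false_and, false_or, or_false, not_false_iff,
        and_true, true_and, not_true]
      itauto
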